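/- For positive self-adjoint bounded operators A, B on a Hilbert space and s ∈ [0,1], ‖A^s B^s‖_op ≤ ‖A B‖^s_op (Cordes inequality). -/

import Mathlib

open scoped NNReal ENNReal

section Key
variable {A : Type*} [CStarAlgebra A] [PartialOrder A] [StarOrderedRing A]

lemma contPow {s : ℝ} (hs : 0 ≤ s) : Continuous (fun x : ℝ => x ^ s) :=
  continuous_iff_continuousAt.2 fun x => Real.continuousAt_rpow_const x s (Or.inr hs)

omit [PartialOrder A] [StarOrderedRing A] in
lemma spectralRadius_mul_comm' (a b : A) :
    spectralRadius ℂ (a * b) = spectralRadius ℂ (b * a) := by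
  have key : ∀ x y : A, spectralRadius ℂ (x * y) ≤ spectralRadius ℂ (y * x) := by
    intro x y
    rw [spectralRadius, spectralRadius]
    refine iSup₂_le fun k hk => ?_
    rcases eq_or_ne k 0 with rfl | hk0
    · simp
    · have hmem : k ∈ spectrum ℂ (x * y) \ {0} := ⟨hk, hk0⟩
      replace hmem : k ∈ spectrum ℂ (y * x) \ {0} := ⟨(spectrum.unit_mem_mul_comm (r := Units.mk0 k hk0)).1 hk, hk0⟩
      exact le_iSup₂ (f := fun k (_ : k ∈ spectrum ℂ (y * x)) => (‖k‖₊ : ℝ≥0∞)) k hmem.1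
  exact le_antisymm (key a b) (key b a)

omit [PartialOrder A] [StarOrderedRing A] in
lemma pw_sa (a : A) (s : ℝ) : IsSelfAdjoint (cfc (fun x : ℝ => x ^ s) a) :=
  cfc_predicate _ _

lemma pw_mul (a : A) {s t : ℝ} (hs : 0 ≤ s) (ht : 0 ≤ t) (hst : s + t ≠ 0) (ha : 0 ≤ a) :
    cfc (fun x : ℝ => x ^ s) a * cfc (fun x : ℝ => x ^ t) a
      = cfc (fun x : ℝ => x ^ (s + t)) a := by
  rw [← cfc_mul _ _ a (contPow hs).continuousOn (contPow ht).continuousOn]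
  exact cfc_congr fun x hx => (Real.rpow_add' (spectrum_nonneg_of_nonneg ha hx) hst).symm

omit [PartialOrder A] [StarOrderedRing A] in
lemma norm_pw_symm (a b : A) (s t : ℝ) :
    ‖cfc (fun x : ℝ => x ^ s) b * cfc (fun x : ℝ => x ^ t) a‖
      = ‖cfc (fun x : ℝ => x ^ t) a * cfc (fun x : ℝ => x ^ s) b‖ := by
  conv_lhs => rw [← norm_star (cfc (fun x : ℝ => x ^ s) b * cfc (fun x : ℝ => x ^ t) a),
    star_mul, (pw_sa a t).star_eq, (pw_sa b s).star_eq]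



lemma cordes_key [Nontrivial A] (a b : A) (ha : 0 ≤ a) (hb : 0 ≤ b) {s t : ℝ} (hs : 0 ≤ s)
    (ht : 0 ≤ t) (hst : 0 < s + t) :
    ‖(cfc (fun x : ℝ => x ^ ((s+t)/2)) a) * (cfc (fun x : ℝ => x ^ ((s+t)/2)) b)‖ ^ 2
      ≤ ‖(cfc (fun x : ℝ => x ^ (s) ) a) * (cfc (fun x : ℝ => x ^ (s) ) b)‖ * ‖(cfc (fun x : ℝ => x ^ (t) ) a) * (cfc (fun x : ℝ => x ^ (t) ) b)‖ := by
  set m : ℝ := (s+t)/2 with hm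
  set X := (cfc (fun x : ℝ => x ^ (m) ) a) * (cfc (fun x : ℝ => x ^ (m) ) b) with hX
  have hm0 : 0 ≤ m := by positivity
  have hmm : m + m = s + t := by rw [hm]; ring
  have hmm0 : m + m ≠ 0 := by rw [hmm]; exact hst.ne'
  have h1 : ‖X‖ ^ 2 = ‖star X * X‖ := by
    rw [CStarRing.norm_star_mul_self, sq]
  have hstar : star X = (cfc (fun x : ℝ => x ^ (m) ) b) * (cfc (fun x : ℝ => x ^ (m) ) a) := by
    rw [hX, star_mul, (pw_sa a m).star_eq, (pw_sa b m).star_eq]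
  have hma : (cfc (fun x : ℝ => x ^ (m) ) a) * (cfc (fun x : ℝ => x ^ (m) ) a) = (cfc (fun x : ℝ => x ^ (s+t) ) a) := by rw [pw_mul a hm0 hm0 hmm0 ha, hmm]
  have hmb : (cfc (fun x : ℝ => x ^ (m) ) b) * (cfc (fun x : ℝ => x ^ (m) ) b) = (cfc (fun x : ℝ => x ^ (s+t) ) b) := by rw [pw_mul b hm0 hm0 hmm0 hb, hmm]
  have h2 : star X * X = (cfc (fun x : ℝ => x ^ (m) ) b) * ((cfc (fun x : ℝ => x ^ (s+t) ) a) * (cfc (fun x : ℝ => x ^ (m) ) b)) := by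
    rw [hstar, hX, mul_assoc, ← mul_assoc ((cfc (fun x : ℝ => x ^ (m) ) a)) ((cfc (fun x : ℝ => x ^ (m) ) a)) ((cfc (fun x : ℝ => x ^ (m) ) b)), hma]
  have hY : IsSelfAdjoint ((cfc (fun x : ℝ => x ^ (m) ) b) * ((cfc (fun x : ℝ => x ^ (s+t) ) a) * (cfc (fun x : ℝ => x ^ (m) ) b))) := by
    rw [IsSelfAdjoint, star_mul, star_mul, (pw_sa a (s+t)).star_eq, (pw_sa b m).star_eq,
      mul_assoc]
  have h3 : (‖(cfc (fun x : ℝ => x ^ (m) ) b) * ((cfc (fun x : ℝ => x ^ (s+t) ) a) * (cfc (fun x : ℝ => x ^ (m) ) b))‖₊ : ℝ≥0∞)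
      = spectralRadius ℂ (((cfc (fun x : ℝ => x ^ (t) ) a) * (cfc (fun x : ℝ => x ^ (t) ) b)) * ((cfc (fun x : ℝ => x ^ (s) ) b) * (cfc (fun x : ℝ => x ^ (s) ) a))) := by
    rw [← hY.spectralRadius_eq_nnnorm, spectralRadius_mul_comm']
    have e1 : (cfc (fun x : ℝ => x ^ (s+t) ) a) * (cfc (fun x : ℝ => x ^ (m) ) b) * (cfc (fun x : ℝ => x ^ (m) ) b) = (cfc (fun x : ℝ => x ^ (s) ) a) * ((cfc (fun x : ℝ => x ^ (t) ) a) * (cfc (fun x : ℝ => x ^ (t) ) b) * ((cfc (fun x : ℝ => x ^ (s) ) b))) := by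
      rw [mul_assoc, hmb, ← pw_mul a hs ht hst.ne' ha,
        show s + t = t + s from add_comm s t, ← pw_mul b ht hs (show t + s ≠ 0 by rw [add_comm]; exact hst.ne') hb]
      simp only [mul_assoc]
    rw [e1, spectralRadius_mul_comm']
    congr 1
    simp only [mul_assoc]
  have h4 : spectralRadius ℂ (((cfc (fun x : ℝ => x ^ (t) ) a) * (cfc (fun x : ℝ => x ^ (t) ) b)) * ((cfc (fun x : ℝ => x ^ (s) ) b) * (cfc (fun x : ℝ => x ^ (s) ) a)))
      ≤ (‖(cfc (fun x : ℝ => x ^ (t) ) a) * (cfc (fun x : ℝ => x ^ (t) ) b)‖₊ * ‖(cfc (fun x : ℝ => x ^ (s) ) b) * (cfc (fun x : ℝ => x ^ (s) ) a)‖₊ : ℝ≥0∞) := by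
    refine (spectrum.spectralRadius_le_nnnorm _).trans ?_
    exact_mod_cast ENNReal.coe_le_coe.2 (nnnorm_mul_le _ _)
  have h5 : ‖star X * X‖ ≤ ‖(cfc (fun x : ℝ => x ^ (t) ) a) * (cfc (fun x : ℝ => x ^ (t) ) b)‖ * ‖(cfc (fun x : ℝ => x ^ (s) ) b) * (cfc (fun x : ℝ => x ^ (s) ) a)‖ := by
    rw [h2]
    have h6 := h3.le.trans h4
    rw [← ENNReal.coe_mul, ENNReal.coe_le_coe] at h6
    exact_mod_cast h6
  rw [h1]
  calc ‖star X * X‖ ≤ ‖(cfc (fun x : ℝ => x ^ (t) ) a) * (cfc (fun x : ℝ => x ^ (t) ) b)‖ * ‖(cfc (fun x : ℝ => x ^ (s) ) b) * (cfc (fun x : ℝ => x ^ (s) ) a)‖ := h5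
    _ = ‖(cfc (fun x : ℝ => x ^ (s) ) a) * (cfc (fun x : ℝ => x ^ (s) ) b)‖ * ‖(cfc (fun x : ℝ => x ^ (t) ) a) * (cfc (fun x : ℝ => x ^ (t) ) b)‖ := by rw [norm_pw_symm a b s s]; ring

end Key

section Main
variable {A : Type*} [CStarAlgebra A] [PartialOrder A] [StarOrderedRing A]

lemma pw_one' (a : A) (ha : 0 ≤ a) : cfc (fun x : ℝ => x ^ (1:ℝ)) a = a := by
  have h : cfc (fun x : ℝ => x ^ (1:ℝ)) a = cfc (fun x : ℝ => x) a :=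
    cfc_congr fun x _ => Real.rpow_one x
  rw [h, cfc_id' ℝ a]

lemma pw_zero' (a : A) (ha : 0 ≤ a) : cfc (fun x : ℝ => x ^ (0:ℝ)) a = 1 := by
  have h : cfc (fun x : ℝ => x ^ (0:ℝ)) a = cfc (fun _ : ℝ => (1:ℝ)) a :=
    cfc_congr fun x _ => Real.rpow_zero x
  rw [h, cfc_const_one ℝ a]

lemma pw_norm_le [Nontrivial A] (a : A) (ha : 0 ≤ a) {s : ℝ} (hs0 : 0 ≤ s) (hs1 : s ≤ 1) :
    ‖cfc (fun x : ℝ => x ^ s) a‖ ≤ max 1 ‖a‖ := by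
  apply norm_cfc_le (by positivity)
  intro x hx
  have hx0 : 0 ≤ x := spectrum_nonneg_of_nonneg ha hx
  have hxa : x ≤ ‖a‖ := by
    have := spectrum.norm_le_norm_of_mem hx
    rwa [Real.norm_eq_abs, abs_of_nonneg hx0] at this
  rw [Real.norm_eq_abs, abs_of_nonneg (Real.rpow_nonneg hx0 s)]
  calc x ^ s ≤ (max 1 ‖a‖) ^ s :=
        Real.rpow_le_rpow hx0 (hxa.trans (le_max_right _ _)) hs0
    _ ≤ (max 1 ‖a‖) ^ (1:ℝ) :=
        Real.rpow_le_rpow_of_exponent_le (le_max_left _ _) hs1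
    _ = max 1 ‖a‖ := Real.rpow_one _

/-- Cordes inequality in a unital C⋆-algebra. -/
lemma cordes_main [Nontrivial A] (a b : A) (ha : 0 ≤ a) (hb : 0 ≤ b) {s : ℝ}
    (hs0 : 0 ≤ s) (hs1 : s ≤ 1) :
    ‖cfc (fun x : ℝ => x ^ s) a * cfc (fun x : ℝ => x ^ s) b‖ ≤ ‖a * b‖ ^ s := by
  set h : ℝ → ℝ := fun u => ‖cfc (fun x : ℝ => x ^ u) a * cfc (fun x : ℝ => x ^ u) b‖ with hh
  have h_nonneg : ∀ u, 0 ≤ h u := fun u => norm_nonneg _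
  have h_zero : h 0 = 1 := by
    rw [hh]; simp only [pw_zero' a ha, pw_zero' b hb, mul_one, norm_one]
  have h_one : h 1 = ‖a * b‖ := by
    rw [hh]; simp only [pw_one' a ha, pw_one' b hb]
  have key : ∀ u v : ℝ, 0 ≤ u → 0 ≤ v → 0 < u + v → h ((u+v)/2) ^ 2 ≤ h u * h v :=
    fun u v hu hv huv => cordes_key a b ha hb hu hv huv
  set M : ℝ := ‖a * b‖ with hM
  have hM0 : 0 ≤ M := norm_nonneg _
  have goal_eq : ‖cfc (fun x : ℝ => x ^ s) a * cfc (fun x : ℝ => x ^ s) b‖ = h s := rfl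
  rw [goal_eq]
  rcases eq_or_lt_of_le hM0 with hMz | hMpos
  · -- M = 0 case
    rcases eq_or_lt_of_le hs0 with rfl | hs0'
    · rw [Real.rpow_zero]
      exact h_zero.le
    · -- show h s = 0 for 0 < s ≤ 1 by archimedean induction
      have main : ∀ n : ℕ, ∀ u : ℝ, (1/2)^n ≤ u → u ≤ 1 → h u = 0 := by
        intro n
        induction n with
        | zero =>
          intro u hu1 hu2
          have : u = 1 := le_antisymm hu2 (by simpa using hu1)
          rw [this, h_one, ← hMz]
        | succ n ih =>
          intro u hu1 hu2
          have hu0 : 0 < u := lt_of_lt_of_le (by positivity) hu1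
          rcases le_or_gt (2*u) 1 with hc | hc
          · have h2u : h (2*u) = 0 := by
              apply ih
              · calc (1/2:ℝ)^n = 2 * (1/2)^(n+1) := by ring
                  _ ≤ 2 * u := by linarith
              · exact hc
            have := key (2*u) 0 (by linarith) le_rfl (by linarith)
            rw [h_zero, h2u, zero_mul] at this
            have : h ((2*u+0)/2) = 0 := by
              have hmn := h_nonneg ((2*u+0)/2)
              nlinarith
            rwa [show (2*u+0)/2 = u by ring] at this
          · have := key (2*u-1) 1 (by linarith) zero_le_one (by linarith)
            rw [h_one, ← hMz, mul_zero] at this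
            have h0 : h ((2*u-1+1)/2) = 0 := by
              have hmn := h_nonneg ((2*u-1+1)/2)
              nlinarith
            rwa [show (2*u-1+1)/2 = u by ring] at h0
      obtain ⟨n, hn⟩ : ∃ n : ℕ, (1/2:ℝ)^n < s := by
        obtain ⟨n, hn⟩ := exists_pow_lt_of_lt_one hs0' (by norm_num : (1/2:ℝ) < 1)
        exact ⟨n, hn⟩
      rw [main n s hn.le hs1]
      exact Real.rpow_nonneg hM0 s
  · -- M > 0 case
    set φ : ℝ → ℝ := fun u => h u / M ^ u with hφ
    have hMu : ∀ u : ℝ, 0 < M ^ u := fun u => Real.rpow_pos_of_pos hMpos u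
    have φ_nonneg : ∀ u, 0 ≤ φ u := fun u => div_nonneg (h_nonneg u) (hMu u).le
    set C : Set ℝ := (fun u => φ u) '' (Set.Icc 0 1) with hC
    have hC_ne : C.Nonempty := ⟨φ 0, ⟨0, by simp [Set.mem_Icc], rfl⟩⟩
    have hC_bdd : BddAbove C := by
      refine ⟨(max 1 ‖a‖) * (max 1 ‖b‖) / min 1 M, ?_⟩
      rintro x ⟨u, ⟨hu0, hu1⟩, rfl⟩
      have hnum : h u ≤ (max 1 ‖a‖) * (max 1 ‖b‖) :=
        (norm_mul_le _ _).trans (mul_le_mul (pw_norm_le a ha hu0 hu1)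
          (pw_norm_le b hb hu0 hu1) (norm_nonneg _) (by positivity))
      have hden : min 1 M ≤ M ^ u := by
        rcases le_total 1 M with hM1 | hM1
        · calc min 1 M ≤ 1 := min_le_left _ _
            _ = M ^ (0:ℝ) := (Real.rpow_zero M).symm
            _ ≤ M ^ u := Real.rpow_le_rpow_of_exponent_le hM1 hu0
        · calc min 1 M ≤ M := min_le_right _ _
            _ = M ^ (1:ℝ) := (Real.rpow_one M).symm
            _ ≤ M ^ u := Real.rpow_le_rpow_of_exponent_ge hMpos hM1 hu1
      have hmin : (0:ℝ) < min 1 M := lt_min one_pos hMpos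
      exact div_le_div₀ (by positivity) hnum hmin hden
    set S : ℝ := sSup C with hS
    have φ_zero : φ 0 = 1 := by rw [hφ]; simp [h_zero, Real.rpow_zero]
    have φ_one : φ 1 = 1 := by rw [hφ]; simp [h_one, Real.rpow_one, hM, div_self hMpos.ne', norm_pos_iff.mp hMpos]
    have hS1 : 1 ≤ S := by
      rw [← φ_zero]
      exact le_csSup hC_bdd ⟨0, by simp [Set.mem_Icc], rfl⟩
    have sq_le : ∀ u : ℝ, 0 ≤ u → u ≤ 1 → φ u ^ 2 ≤ S := by
      intro u hu0 hu1
      rcases eq_or_lt_of_le hu0 with rfl | hu0'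
      · rw [φ_zero]; simpa using hS1
      rcases le_or_gt (2*u) 1 with hc | hc
      · have hk := key (2*u) 0 (by linarith) le_rfl (by linarith)
        rw [h_zero, mul_one, show (2*u+0)/2 = u by ring] at hk
        have hφu : φ u ^ 2 ≤ φ (2*u) := by
          rw [hφ]
          rw [div_pow, div_le_div_iff₀ (by positivity) (hMu _)]
          have hMeq : (M ^ u) ^ 2 = M ^ (2*u) := by
            rw [sq, ← Real.rpow_add hMpos]; ring_nf
          calc h u ^ 2 * M ^ (2*u) ≤ h (2*u) * M ^ (2*u) :=
                mul_le_mul_of_nonneg_right hk (hMu _).le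
            _ = h (2*u) * (M ^ u) ^ 2 := by rw [hMeq]
        exact hφu.trans (le_csSup hC_bdd ⟨2*u, ⟨by linarith, hc⟩, rfl⟩)
      · have hk := key (2*u-1) 1 (by linarith) zero_le_one (by linarith)
        rw [h_one, show (2*u-1+1)/2 = u by ring] at hk
        have hφu : φ u ^ 2 ≤ φ (2*u-1) := by
          rw [hφ]
          rw [div_pow, div_le_div_iff₀ (by positivity) (hMu _)]
          have hMeq : (M ^ u) ^ 2 = M ^ (2*u-1) * M := by
            have e2 : M ^ (2*u-1+1) = M ^ (2*u-1) * M := by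
              rw [Real.rpow_add hMpos, Real.rpow_one]
            rw [sq, ← Real.rpow_add hMpos, ← e2]; ring_nf
          calc h u ^ 2 * M ^ (2*u-1) ≤ (h (2*u-1) * M) * M ^ (2*u-1) :=
                mul_le_mul_of_nonneg_right hk (hMu _).le
            _ = h (2*u-1) * (M ^ u) ^ 2 := by rw [hMeq]; ring
        exact hφu.trans (le_csSup hC_bdd ⟨2*u-1, ⟨by linarith, by linarith⟩, rfl⟩)
    have hS_le : S ≤ 1 := by
      have hS_le_sqrt : S ≤ Real.sqrt S := by
        apply csSup_le hC_ne
        rintro x ⟨u, ⟨hu0, hu1⟩, rfl⟩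
        rw [Real.le_sqrt (φ_nonneg u) (by linarith)]
        exact sq_le u hu0 hu1
      have hsq : Real.sqrt S ^ 2 = S := Real.sq_sqrt (by linarith)
      nlinarith [Real.sqrt_nonneg S]
    have : φ s ≤ 1 := (le_csSup hC_bdd ⟨s, ⟨hs0, hs1⟩, rfl⟩).trans hS_le
    rw [hφ] at this
    calc h s = h s / M ^ s * M ^ s := (div_mul_cancel₀ _ (hMu s).ne').symm
      _ ≤ 1 * M ^ s := mul_le_mul_of_nonneg_right this (hMu s).le
      _ = M ^ s := one_mul _
end Main

/-- Cordes inequality: for positive (self-adjoint) bounded operators `A, B` on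
a Hilbert space and `s ∈ [0,1]`, `‖A^s B^s‖ ≤ ‖AB‖^s`, where `A^s` is given by the
continuous functional calculus. -/
theorem cordes_inequality
    {E : Type*} [NormedAddCommGroup E] [InnerProductSpace ℂ E] [CompleteSpace E]
    (A B : E →L[ℂ] E) (hA : A.IsPositive) (hB : B.IsPositive)
    (s : ℝ) (hs0 : 0 ≤ s) (hs1 : s ≤ 1) :
    ‖(cfc (fun x : ℝ => x ^ s) A).comp (cfc (fun x : ℝ => x ^ s) B)‖
      ≤ ‖A.comp B‖ ^ s := by
  rcases subsingleton_or_nontrivial (E →L[ℂ] E) with hsub | hnt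
  · have h1 : (cfc (fun x : ℝ => x ^ s) A).comp (cfc (fun x : ℝ => x ^ s) B) = 0 :=
      Subsingleton.elim _ _
    rw [h1, norm_zero]
    exact Real.rpow_nonneg (norm_nonneg _) s
  · have ha : (0 : E →L[ℂ] E) ≤ A := (ContinuousLinearMap.nonneg_iff_isPositive A).2 hA
    have hb : (0 : E →L[ℂ] E) ≤ B := (ContinuousLinearMap.nonneg_iff_isPositive B).2 hB
    exact cordes_main A B ha hb hs0 hs1
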